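/- For nonnegative measurable f on ℝᵈ with finite relevant integrals and reals p, q > 1, one has (∫f^p dx)(∫f^q dx) ≤ (∫f^{p+q−1} dx)(∫f dx). -/

import Mathlib

open MeasureTheory Real

lemma holder_interp {α : Type*} [MeasurableSpace α] (μ : Measure α) (g : α → ENNReal)
    (hg : Measurable g) (r a : ℝ) (ha : 0 < a) (ha1 : a < 1) (hr : 0 < r) :
    ∫⁻ x, g x ^ (a * r + (1 - a)) ∂μ ≤
      (∫⁻ x, g x ^ r ∂μ) ^ a * (∫⁻ x, g x ∂μ) ^ (1 - a) := by
  have hconj : Real.HolderConjugate (1/a) (1/(1-a)) := by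
    rw [Real.holderConjugate_iff]; constructor
    · rw [lt_div_iff₀ ha]; linarith
    · rw [one_div, one_div, inv_inv, inv_inv]; ring
  have h := ENNReal.lintegral_mul_le_Lp_mul_Lq μ hconj
    (f := fun x => g x ^ (a * r)) (g := fun x => g x ^ (1 - a))
    ((hg.pow_const _).aemeasurable) ((hg.pow_const _).aemeasurable)
  have e1 : ∀ x, g x ^ (a * r + (1 - a)) = g x ^ (a * r) * g x ^ (1 - a) := fun x =>
    ENNReal.rpow_add_of_nonneg _ _ (by positivity) (by linarith)
  have e2 : ∀ x, (g x ^ (a * r)) ^ (1/a) = g x ^ r := fun x => by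
    rw [← ENNReal.rpow_mul]; congr 1; field_simp
  have e3 : ∀ x, (g x ^ (1 - a)) ^ (1/(1-a)) = g x := fun x => by
    rw [← ENNReal.rpow_mul]
    rw [mul_one_div, div_self (by linarith : (1:ℝ) - a ≠ 0), ENNReal.rpow_one]
  have e4 : 1 / (1/a) = a := by field_simp
  have e5 : 1 / (1/(1-a)) = 1 - a := by
    rw [one_div, one_div, inv_inv]
  simp only [Pi.mul_apply, e2, e3, e4, e5] at h
  calc ∫⁻ x, g x ^ (a * r + (1 - a)) ∂μ
      = ∫⁻ x, g x ^ (a * r) * g x ^ (1 - a) ∂μ := by simp only [e1]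
    _ ≤ _ := h

/-- The Hölder/interpolation inequality: for nonnegative measurable `f ∈ L¹ ∩ L^{p+q-1}`
and reals `p, q > 1`, `(∫f^p)(∫f^q) ≤ (∫f^{p+q-1})(∫f)`. -/
theorem stmt_6 (d : ℕ) (hd : 0 < d) (p q : ℝ) (hp : 1 < p) (hq : 1 < q)
    (f : EuclideanSpace ℝ (Fin d) → ℝ)
    (hmeas : Measurable f) (hnonneg : ∀ x, 0 ≤ f x)
    (hint1 : Integrable f)
    (hint2 : Integrable (fun x => f x ^ (p + q - 1))) :
    (∫ x, f x ^ p) * ∫ x, f x ^ q ≤ (∫ x, f x ^ (p + q - 1)) * ∫ x, f x := by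
  set μ : Measure (EuclideanSpace ℝ (Fin d)) := volume
  set g : EuclideanSpace ℝ (Fin d) → ENNReal := fun x => ENNReal.ofReal (f x) with hgdef
  have hgm : Measurable g := hmeas.ennreal_ofReal
  set r : ℝ := p + q - 1 with hrdef
  have hs : 0 < p + q - 2 := by linarith
  set a : ℝ := (p - 1) / (p + q - 2) with hadef
  set b : ℝ := (q - 1) / (p + q - 2) with hbdef
  have ha : 0 < a := by rw [hadef]; exact div_pos (by linarith) hs
  have hb : 0 < b := by rw [hbdef]; exact div_pos (by linarith) hs
  have hab : a + b = 1 := by rw [hadef, hbdef]; field_simp; ring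
  have ha1 : a < 1 := by linarith
  have hb1 : b < 1 := by linarith
  have hr : 0 < r := by rw [hrdef]; linarith
  -- lintegral versions
  have hap : a * r + (1 - a) = p := by
    rw [hadef, hrdef]; field_simp; ring
  have hbq : b * r + (1 - b) = q := by
    rw [hbdef, hrdef]; field_simp; ring
  have H1 := holder_interp μ g hgm r a ha ha1 hr
  have H2 := holder_interp μ g hgm r b hb hb1 hr
  rw [hap] at H1
  rw [hbq] at H2
  have key : (∫⁻ x, g x ^ p ∂μ) * (∫⁻ x, g x ^ q ∂μ) ≤
      (∫⁻ x, g x ^ r ∂μ) * (∫⁻ x, g x ∂μ) := by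
    calc (∫⁻ x, g x ^ p ∂μ) * (∫⁻ x, g x ^ q ∂μ)
        ≤ ((∫⁻ x, g x ^ r ∂μ) ^ a * (∫⁻ x, g x ∂μ) ^ (1 - a)) *
          ((∫⁻ x, g x ^ r ∂μ) ^ b * (∫⁻ x, g x ∂μ) ^ (1 - b)) := mul_le_mul' H1 H2
      _ = (∫⁻ x, g x ^ r ∂μ) ^ (a + b) * (∫⁻ x, g x ∂μ) ^ ((1 - a) + (1 - b)) := by
          rw [ENNReal.rpow_add_of_nonneg _ _ ha.le hb.le,
            ENNReal.rpow_add_of_nonneg _ _ (by linarith : (0:ℝ) ≤ 1 - a) (by linarith : (0:ℝ) ≤ 1 - b)]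
          ring
      _ = (∫⁻ x, g x ^ r ∂μ) * (∫⁻ x, g x ∂μ) := by
          rw [hab, show (1 - a) + (1 - b) = 1 by linarith, ENNReal.rpow_one,
            ENNReal.rpow_one]
  -- identify Bochner integrals with lintegrals
  have hofReal : ∀ s : ℝ, 0 < s → (∫ x, f x ^ s ∂μ) = (∫⁻ x, g x ^ s ∂μ).toReal := by
    intro s hs
    rw [integral_eq_lintegral_of_nonneg_ae
      (Filter.Eventually.of_forall fun x => Real.rpow_nonneg (hnonneg x) s)
      ((hmeas.pow_const s).aestronglyMeasurable)]
    congr 1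
    refine lintegral_congr fun x => ?_
    rw [hgdef]
    exact (ENNReal.ofReal_rpow_of_nonneg (hnonneg x) hs.le).symm
  have hofReal1 : (∫ x, f x ∂μ) = (∫⁻ x, g x ∂μ).toReal := by
    rw [integral_eq_lintegral_of_nonneg_ae
      (Filter.Eventually.of_forall hnonneg) hmeas.aestronglyMeasurable]
  -- finiteness
  have hfin1 : (∫⁻ x, g x ∂μ) ≠ ⊤ := by
    have := hint1.hasFiniteIntegral
    rw [hasFiniteIntegral_iff_ofReal (Filter.Eventually.of_forall hnonneg)] at this
    exact this.ne
  have hfinr : (∫⁻ x, g x ^ r ∂μ) ≠ ⊤ := by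
    have := hint2.hasFiniteIntegral
    rw [hasFiniteIntegral_iff_ofReal
      (Filter.Eventually.of_forall fun x => Real.rpow_nonneg (hnonneg x) r)] at this
    refine ne_of_lt (lt_of_le_of_lt (le_of_eq ?_) this)
    refine lintegral_congr fun x => ?_
    rw [hgdef]
    exact ENNReal.ofReal_rpow_of_nonneg (hnonneg x) hr.le
  have hfinRHS : (∫⁻ x, g x ^ r ∂μ) * (∫⁻ x, g x ∂μ) ≠ ⊤ := ENNReal.mul_ne_top hfinr hfin1
  rw [hofReal p (by linarith), hofReal q (by linarith), hofReal r hr, hofReal1,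
    ← ENNReal.toReal_mul, ← ENNReal.toReal_mul]
  exact ENNReal.toReal_mono hfinRHS key
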